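/- arXiv:2511.04465 — 8 statements merged into one kernel-verified Lean document; each statement's English description precedes it below -/
import Mathlib

section
/- Every user-additive payment rule is fraud-proof and bribery-proof. -/
open Finset

/-- An instance `I = (N, C, w)`: a finite nonempty set of users `N`, a finite set of
artists `C`, and nonnegative real engagement weights `w i j` (supported on
`users × artists`), such that every user has positive total engagement. -/
structure Inst where
  users : Finset ℕ
  artists : Finset ℕ
  w : ℕ → ℕ → ℝ
  users_nonempty : users.Nonempty
  w_nonneg : ∀ i j, 0 ≤ w i j
  w_supp : ∀ i j, w i j ≠ 0 → i ∈ users ∧ j ∈ artists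
  w_pos : ∀ i ∈ users, 0 < ∑ j ∈ artists, w i j

/-- `φ` is a payment rule (with revenue share `α`) on the class of instances satisfying `P`:
payments to artists are nonnegative and total `α·|N|`. -/
def IsRuleOn (P : Inst → Prop) (α : ℝ) (φ : Inst → ℕ → ℝ) : Prop :=
  ∀ I : Inst, P I →
    (∀ j ∈ I.artists, 0 ≤ φ I j) ∧ (∑ j ∈ I.artists, φ I j) = α * I.users.card

/-- `φ` is a payment rule (with revenue share `α`). -/
abbrev IsRule (α : ℝ) (φ : Inst → ℕ → ℝ) : Prop := IsRuleOn (fun _ => True) α φ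

/-- Fraud-proofness, relative to a class `P` of instances: for instances
`I = (N \ N̂, C, w)` and `I' = (N, C, w')` agreeing on the genuine users `N \ N̂`,
and any coalition `Ĉ ⊆ C`, the gain `φ_{I'}(Ĉ) − φ_I(Ĉ)` is at most `|N̂|`. -/
def FraudProofOn (P : Inst → Prop) (φ : Inst → ℕ → ℝ) : Prop :=
  ∀ I I' : Inst, P I → P I' →
    ∀ Nhat : Finset ℕ, Nhat ⊆ I'.users → I.users = I'.users \ Nhat →
      I.artists = I'.artists →
      (∀ i ∈ I.users, ∀ j ∈ I.artists, I.w i j = I'.w i j) →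
      ∀ Chat ⊆ I.artists,
        (∑ j ∈ Chat, φ I' j) - (∑ j ∈ Chat, φ I j) ≤ (Nhat.card : ℝ)

/-- Fraud-proofness. -/
abbrev FraudProof (φ : Inst → ℕ → ℝ) : Prop := FraudProofOn (fun _ => True) φ

/-- Single-user fraud-proofness: fraud-proofness restricted to `|N̂| = 1`. -/
def SingleFraudProof (φ : Inst → ℕ → ℝ) : Prop :=
  ∀ I I' : Inst,
    ∀ Nhat : Finset ℕ, Nhat.card = 1 → Nhat ⊆ I'.users → I.users = I'.users \ Nhat →
      I.artists = I'.artists →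
      (∀ i ∈ I.users, ∀ j ∈ I.artists, I.w i j = I'.w i j) →
      ∀ Chat ⊆ I.artists,
        (∑ j ∈ Chat, φ I' j) - (∑ j ∈ Chat, φ I j) ≤ 1

open Classical in
/-- The number of users whose engagement vectors differ between two instances
(on the same user and artist sets). -/
noncomputable def bribedCount (I I' : Inst) : ℕ :=
  (I.users.filter (fun i => ∃ j ∈ I.artists, I.w i j ≠ I'.w i j)).card

/-- Bribery-proofness, relative to a class `P` of instances: for instances `I, I'` on the
same users and artists whose engagement vectors differ for exactly `k` users, and any
coalition `Ĉ ⊆ C`, the gain `φ_{I'}(Ĉ) − φ_I(Ĉ)` is at most `k`. -/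
def BriberyProofOn (P : Inst → Prop) (φ : Inst → ℕ → ℝ) : Prop :=
  ∀ I I' : Inst, P I → P I' →
    I.users = I'.users → I.artists = I'.artists →
    ∀ Chat ⊆ I.artists,
      (∑ j ∈ Chat, φ I' j) - (∑ j ∈ Chat, φ I j) ≤ (bribedCount I I' : ℝ)

/-- Bribery-proofness. -/
abbrev BriberyProof (φ : Inst → ℕ → ℝ) : Prop := BriberyProofOn (fun _ => True) φ

/-- Single-user bribery-proofness: bribery-proofness restricted to `k = 1`. -/
def SingleBriberyProof (φ : Inst → ℕ → ℝ) : Prop :=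
  ∀ I I' : Inst,
    I.users = I'.users → I.artists = I'.artists →
    bribedCount I I' = 1 →
    ∀ Chat ⊆ I.artists,
      (∑ j ∈ Chat, φ I' j) - (∑ j ∈ Chat, φ I j) ≤ 1

/-- Anonymity (relative to a class `P`): permuting the labels of the users does not
affect the payoffs of the artists. -/
def AnonymousOn (P : Inst → Prop) (φ : Inst → ℕ → ℝ) : Prop :=
  ∀ I I' : Inst, P I → P I' →
    I.users = I'.users → I.artists = I'.artists →
    ∀ σ : Equiv.Perm ℕ, (∀ i ∈ I.users, σ i ∈ I.users) →
      (∀ i ∈ I.users, ∀ j ∈ I.artists, I.w i j = I'.w (σ i) j) →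
      ∀ j ∈ I.artists, φ I j = φ I' j

/-- Neutrality (relative to a class `P`): permuting the labels of the artists permutes
their payoffs. -/
def NeutralOn (P : Inst → Prop) (φ : Inst → ℕ → ℝ) : Prop :=
  ∀ I I' : Inst, P I → P I' →
    I.users = I'.users → I.artists = I'.artists →
    ∀ σ : Equiv.Perm ℕ, (∀ j ∈ I.artists, σ j ∈ I.artists) →
      (∀ i ∈ I.users, ∀ j ∈ I.artists, I.w i j = I'.w i (σ j)) →
      ∀ j ∈ I.artists, φ I j = φ I' (σ j)

/-- Neutrality. -/
abbrev Neutral (φ : Inst → ℕ → ℝ) : Prop := NeutralOn (fun _ => True) φ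

/-- No free-ridership (relative to a class `P`): an artist with zero total engagement
receives zero payment. -/
def NoFreeRideOn (P : Inst → Prop) (φ : Inst → ℕ → ℝ) : Prop :=
  ∀ I : Inst, P I → ∀ j ∈ I.artists, (∑ i ∈ I.users, I.w i j) = 0 → φ I j = 0

/-- Sybil-proofness: artists outside `C*` cannot change their combined payoff by
splitting/merging (user-by-user engagement towards `C*` and user totals outside `C*`
are preserved). -/
def SybilProof (φ : Inst → ℕ → ℝ) : Prop :=
  ∀ I I' : Inst, I.users = I'.users → I.artists ⊆ I'.artists →
    ∀ Cstar ⊆ I.artists,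
      (∀ i ∈ I.users, ∀ j ∈ Cstar, I.w i j = I'.w i j) →
      (∀ i ∈ I.users, ∑ j ∈ I.artists \ Cstar, I.w i j = ∑ j ∈ I'.artists \ Cstar, I'.w i j) →
      ∑ j ∈ I.artists \ Cstar, φ I j = ∑ j ∈ I'.artists \ Cstar, φ I' j

/-- Strong Sybil-proofness: as Sybil-proofness, but only total engagements
(aggregated over users) are preserved. -/
def StrongSybilProof (φ : Inst → ℕ → ℝ) : Prop :=
  ∀ I I' : Inst, I.users = I'.users → I.artists ⊆ I'.artists →
    ∀ Cstar ⊆ I.artists,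
      (∀ j ∈ Cstar, ∑ i ∈ I.users, I.w i j = ∑ i ∈ I'.users, I'.w i j) →
      (∑ i ∈ I.users, ∑ j ∈ I.artists \ Cstar, I.w i j
        = ∑ i ∈ I'.users, ∑ j ∈ I'.artists \ Cstar, I'.w i j) →
      ∑ j ∈ I.artists \ Cstar, φ I j = ∑ j ∈ I'.artists \ Cstar, φ I' j

/-- Engagement monotonicity: if artist `j*`'s engagement weakly increases while every
other artist's engagement weakly decreases, then `j*`'s payoff does not decrease. -/
def EngagementMonotone (φ : Inst → ℕ → ℝ) : Prop :=
  ∀ I I' : Inst, I.users = I'.users → I.artists = I'.artists →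
    ∀ jstar ∈ I.artists,
      (∀ i ∈ I.users, I.w i jstar ≤ I'.w i jstar) →
      (∀ i ∈ I.users, ∀ j ∈ I.artists, j ≠ jstar → I'.w i j ≤ I.w i j) →
      φ I jstar ≤ φ I' jstar

/-- Pigou-Dalton consistency: transferring `δ > 0` of engagement with artist `j` from a
user `i` with more engagement to a user `i'` with less (keeping everything else fixed,
and not overshooting) does not decrease `j`'s payoff. -/
def PigouDalton (φ : Inst → ℕ → ℝ) : Prop :=
  ∀ I I' : Inst, I.users = I'.users → I.artists = I'.artists →
    ∀ i ∈ I.users, ∀ i' ∈ I.users, i ≠ i' →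
      ∀ j ∈ I.artists, ∀ δ : ℝ,
        0 < δ → 0 < I.w i j - δ →
        I'.w i j = I.w i j - δ →
        I'.w i' j = I.w i' j + δ →
        I'.w i' j ≤ I'.w i j →
        (∀ k ∈ I.users, ∀ j' ∈ I.artists, j' ≠ j → I.w k j' = I'.w k j') →
        (∀ k ∈ I.users, k ≠ i → k ≠ i' → I.w k j = I'.w k j) →
        φ I j ≤ φ I' j

/-- User-addition monotonicity: adding one new user (with an arbitrary engagement
vector) does not decrease any artist's payoff. -/
def UserAdditionMonotone (φ : Inst → ℕ → ℝ) : Prop :=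
  ∀ I I' : Inst, I.artists = I'.artists →
    ∀ i₀ : ℕ, i₀ ∉ I.users → I'.users = insert i₀ I.users →
      (∀ i ∈ I.users, ∀ j ∈ I.artists, I.w i j = I'.w i j) →
      ∀ j ∈ I.artists, φ I j ≤ φ I' j

/-- The single-user instance `I_i = ({i}, C, w_i)` extracted from an instance `I`. -/
def Inst.single (I : Inst) (i : ℕ) (hi : i ∈ I.users) : Inst where
  users := {i}
  artists := I.artists
  w := fun i' j => if i' = i then I.w i j else 0
  users_nonempty := Finset.singleton_nonempty i
  w_nonneg := by
    intro i' j
    try dsimp only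
    split
    · exact I.w_nonneg i j
    · exact le_refl 0
  w_supp := by
    intro i' j h
    try dsimp only at h
    split at h
    · rename_i hii
      exact ⟨by simp [hii], (I.w_supp i j h).2⟩
    · exact absurd rfl h
  w_pos := by
    intro i' hi'
    have h : i' = i := Finset.mem_singleton.mp hi'
    simpa [h] using I.w_pos i hi

/-- User-additivity: each artist's payoff is the sum of the payoffs they would obtain in
the single-user instances. -/
def UserAdditive (φ : Inst → ℕ → ℝ) : Prop :=
  ∀ I : Inst, ∀ j ∈ I.artists,
    φ I j = ∑ i ∈ I.users.attach, φ (I.single i.1 i.2) j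

/-- The `GlobalProp` rule: artists are paid proportionally to their share of total
engagement on the platform. -/
noncomputable def globalProp (α : ℝ) (I : Inst) (j : ℕ) : ℝ :=
  α * I.users.card * (∑ i ∈ I.users, I.w i j) /
    (∑ i ∈ I.users, ∑ j' ∈ I.artists, I.w i j')

/-- The `UserProp` rule: an `α` fraction of each user's fee is split proportionally to
that user's engagement. -/
noncomputable def userProp (α : ℝ) (I : Inst) (j : ℕ) : ℝ :=
  α * ∑ i ∈ I.users, (I.w i j / ∑ j' ∈ I.artists, I.w i j')

open Classical in
/-- The `UserEQ` rule: an `α` fraction of each user's fee is split equally among the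
artists with which the user has positive engagement. -/
noncomputable def userEQ (α : ℝ) (I : Inst) (j : ℕ) : ℝ :=
  α * ∑ i ∈ I.users,
    ((if 0 < I.w i j then (1 : ℝ) else 0) /
      ((I.artists.filter (fun j' => 0 < I.w i j')).card : ℝ))

/-- The `ScaledUserProp` rule, given a choice `γ I` of the scaling parameter for each
instance: user `i` contributes `min(γ·‖w_i‖₁, 1)`, split proportionally to `w_i`. -/
noncomputable def scaledUserProp (γ : Inst → ℝ) (I : Inst) (j : ℕ) : ℝ :=
  ∑ i ∈ I.users,
    (min (γ I * ∑ j' ∈ I.artists, I.w i j') 1 * (I.w i j / ∑ j' ∈ I.artists, I.w i j'))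

lemma single_eq {I I' : Inst} {i : ℕ} (hi : i ∈ I.users) (hi' : i ∈ I'.users)
    (ha : I.artists = I'.artists) (hw : ∀ j ∈ I.artists, I.w i j = I'.w i j) :
    I.single i hi = I'.single i hi' := by
  have hw' : ∀ j, I.w i j = I'.w i j := by
    intro j
    by_cases h : j ∈ I.artists
    · exact hw j h
    · have h1 : I.w i j = 0 := by
        by_contra hc; exact h (I.w_supp i j hc).2
      have h2 : I'.w i j = 0 := by
        by_contra hc; exact h (ha ▸ (I'.w_supp i j hc).2)
      rw [h1, h2]
  unfold Inst.single
  congr 1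
  exact funext fun i' => funext fun j => by simp only [hw' j]

open Classical in
noncomputable def Fsum (φ : Inst → ℕ → ℝ) (Chat : Finset ℕ) (I : Inst) (i : ℕ) : ℝ :=
  if h : i ∈ I.users then ∑ j ∈ Chat, φ (I.single i h) j else 0

lemma Fsum_spec (φ : Inst → ℕ → ℝ) (hadd : UserAdditive φ) (Chat : Finset ℕ)
    (I : Inst) (hC : Chat ⊆ I.artists) :
    ∑ j ∈ Chat, φ I j = ∑ i ∈ I.users, Fsum φ Chat I i := by
  classical
  have h1 : ∑ j ∈ Chat, φ I j
      = ∑ i ∈ I.users.attach, ∑ j ∈ Chat, φ (I.single i.1 i.2) j := by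
    rw [Finset.sum_comm]
    exact Finset.sum_congr rfl fun j hj => hadd I j (hC hj)
  rw [h1, ← Finset.sum_attach I.users (Fsum φ Chat I)]
  exact Finset.sum_congr rfl fun i _ => by
    simp only [Fsum, dif_pos i.2]

lemma Fsum_bounds {α : ℝ} (hα0 : 0 < α) (hα1 : α ≤ 1)
    (φ : Inst → ℕ → ℝ) (hφ : IsRule α φ) (Chat : Finset ℕ)
    (I : Inst) (hC : Chat ⊆ I.artists) (i : ℕ) :
    0 ≤ Fsum φ Chat I i ∧ Fsum φ Chat I i ≤ 1 := by
  unfold Fsum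
  split
  · rename_i h
    set J := I.single i h with hJ
    obtain ⟨hnn, hsum⟩ := hφ J trivial
    have hCJ : Chat ⊆ J.artists := hC
    have hcard : (J.users.card : ℝ) = 1 := by simp [hJ, Inst.single]
    constructor
    · exact Finset.sum_nonneg fun j hj => hnn j (hCJ hj)
    · calc ∑ j ∈ Chat, φ J j ≤ ∑ j ∈ J.artists, φ J j :=
          Finset.sum_le_sum_of_subset_of_nonneg hCJ (fun j hj _ => hnn j hj)
        _ = α * J.users.card := hsum
        _ = α := by rw [hcard, mul_one]
        _ ≤ 1 := hα1
  · exact ⟨le_refl 0, zero_le_one⟩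

lemma Fsum_congr (φ : Inst → ℕ → ℝ) (Chat : Finset ℕ) {I I' : Inst} {i : ℕ}
    (hi : i ∈ I.users) (hi' : i ∈ I'.users)
    (ha : I.artists = I'.artists) (hw : ∀ j ∈ I.artists, I.w i j = I'.w i j) :
    Fsum φ Chat I i = Fsum φ Chat I' i := by
  simp only [Fsum, dif_pos hi, dif_pos hi', single_eq hi hi' ha hw]


theorem stmt11 (α : ℝ) (hα : α ∈ Set.Ioc (0 : ℝ) 1)
    (φ : Inst → ℕ → ℝ) (hφ : IsRule α φ)
    (hadd : UserAdditive φ) :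
    FraudProof φ ∧ BriberyProof φ := by
  obtain ⟨hα0, hα1⟩ := hα
  constructor
  · intro I I' _ _ Nhat hNsub husers hart hw Chat hC
    classical
    have hC' : Chat ⊆ I'.artists := hart ▸ hC
    rw [Fsum_spec φ hadd Chat I hC, Fsum_spec φ hadd Chat I' hC']
    have hsplit : ∑ i ∈ I'.users, Fsum φ Chat I' i
        = ∑ i ∈ I'.users \ Nhat, Fsum φ Chat I' i + ∑ i ∈ Nhat, Fsum φ Chat I' i := by
      rw [Finset.sum_sdiff hNsub]
    have heq : ∑ i ∈ I.users, Fsum φ Chat I i = ∑ i ∈ I'.users \ Nhat, Fsum φ Chat I' i := by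
      rw [husers]
      refine Finset.sum_congr rfl fun i hiu => ?_
      have hi : i ∈ I.users := husers ▸ hiu
      have hi' : i ∈ I'.users := (Finset.mem_sdiff.mp hiu).1
      exact Fsum_congr φ Chat hi hi' hart (hw i hi)
    rw [hsplit, heq]
    have : ∑ i ∈ Nhat, Fsum φ Chat I' i ≤ ∑ _i ∈ Nhat, (1:ℝ) :=
      Finset.sum_le_sum fun i _ => (Fsum_bounds hα0 hα1 φ hφ Chat I' hC' i).2
    simpa using this
  · intro I I' _ _ husers hart Chat hC
    classical
    have hC' : Chat ⊆ I'.artists := hart ▸ hC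
    rw [Fsum_spec φ hadd Chat I hC, Fsum_spec φ hadd Chat I' hC', husers]
    rw [← Finset.sum_sub_distrib]
    set B := I.users.filter (fun i => ∃ j ∈ I.artists, I.w i j ≠ I'.w i j) with hB
    have hBsub : B ⊆ I'.users := husers ▸ Finset.filter_subset _ _
    have hzero : ∀ i ∈ I'.users \ B, Fsum φ Chat I' i - Fsum φ Chat I i = 0 := by
      intro i hi
      obtain ⟨hi', hnB⟩ := Finset.mem_sdiff.mp hi
      have hiu : i ∈ I.users := husers ▸ hi'
      have hw : ∀ j ∈ I.artists, I.w i j = I'.w i j := by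
        intro j hj
        by_contra hne
        exact hnB (Finset.mem_filter.mpr ⟨hiu, j, hj, hne⟩)
      rw [Fsum_congr φ Chat hiu hi' hart hw, sub_self]
    rw [← Finset.sum_sdiff hBsub, Finset.sum_eq_zero hzero, zero_add]
    have hle : ∑ i ∈ B, (Fsum φ Chat I' i - Fsum φ Chat I i) ≤ ∑ _i ∈ B, (1:ℝ) := by
      refine Finset.sum_le_sum fun i hi => ?_
      have h1 := (Fsum_bounds hα0 hα1 φ hφ Chat I' hC' i).2
      have h2 := (Fsum_bounds hα0 hα1 φ hφ Chat I hC i).1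
      linarith
    calc ∑ i ∈ B, (Fsum φ Chat I' i - Fsum φ Chat I i) ≤ ∑ _i ∈ B, (1:ℝ) := hle
      _ = B.card := by simp
      _ = (bribedCount I I' : ℝ) := by rw [hB]; rfl
end

section
/- The rule UserProp is Sybil-proof. -/
open Finset

theorem stmt12 (α : ℝ) (hα : α ∈ Set.Ioc (0 : ℝ) 1) :
    SybilProof (userProp α) := by
  intro I I' hu ha Cstar hC h1 h2
  unfold userProp
  have key : ∀ (J : Inst) (D : Finset ℕ),
      ∑ j ∈ D, α * ∑ i ∈ J.users, (J.w i j / ∑ j' ∈ J.artists, J.w i j')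
        = α * ∑ i ∈ J.users, (∑ j ∈ D, J.w i j) / (∑ j' ∈ J.artists, J.w i j') := by
    intro J D
    rw [← Finset.mul_sum, Finset.sum_comm]
    congr 1
    refine Finset.sum_congr rfl fun i _ => ?_
    rw [Finset.sum_div]
  rw [key, key]
  congr 1
  rw [← hu]
  refine Finset.sum_congr rfl fun i hi => ?_
  have hT : ∑ j' ∈ I.artists, I.w i j' = ∑ j' ∈ I'.artists, I'.w i j' := by
    rw [← Finset.sum_sdiff hC, ← Finset.sum_sdiff (hC.trans ha)]
    rw [h2 i hi]
    congr 1
    exact Finset.sum_congr rfl fun j hj => h1 i hi j hj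
  rw [h2 i hi, hT]
end

section
/- The rule UserProp is not Pigou-Dalton consistent: for every α ∈ (0,1] there exist instances I = (N, C, w) and I' = (N, C, w') satisfying the hypotheses of Pigou-Dalton consistency for some artist j but with φ_I(j) > φ_{I'}(j) under UserProp. -/
open Finset

/-- Counterexample instance `I` for Pigou-Dalton failure of `UserProp`. -/
noncomputable def pdI : Inst where
  users := {1, 2}
  artists := {0, 1}
  w := fun i j =>
    if i = 1 ∧ j = 0 then 3 else if i = 1 ∧ j = 1 then 1
    else if i = 2 ∧ j = 0 then 1 else if i = 2 ∧ j = 1 then 100 else 0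
  users_nonempty := by decide
  w_nonneg := by intro i j; split_ifs <;> norm_num
  w_supp := by
    intro i j h
    split_ifs at h with h1 h2 h3 h4 <;>
      first
      | (obtain ⟨hi, hj⟩ := ‹_ ∧ _›; subst hi; subst hj; constructor <;> decide)
      | exact absurd rfl h
  w_pos := by
    intro i hi
    fin_cases hi <;> norm_num

/-- Counterexample instance `I'` for Pigou-Dalton failure of `UserProp`. -/
noncomputable def pdI' : Inst where
  users := {1, 2}
  artists := {0, 1}
  w := fun i j =>
    if i = 1 ∧ j = 0 then 2 else if i = 1 ∧ j = 1 then 1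
    else if i = 2 ∧ j = 0 then 2 else if i = 2 ∧ j = 1 then 100 else 0
  users_nonempty := by decide
  w_nonneg := by intro i j; split_ifs <;> norm_num
  w_supp := by
    intro i j h
    split_ifs at h with h1 h2 h3 h4 <;>
      first
      | (obtain ⟨hi, hj⟩ := ‹_ ∧ _›; subst hi; subst hj; constructor <;> decide)
      | exact absurd rfl h
  w_pos := by
    intro i hi
    fin_cases hi <;> norm_num

theorem stmt14 (α : ℝ) (hα : α ∈ Set.Ioc (0 : ℝ) 1) :
    ¬ PigouDalton (userProp α) := by
  obtain ⟨hα0, _⟩ := hα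
  intro hpd
  have key := hpd pdI pdI' rfl rfl 1 (by decide) 2 (by decide) (by decide) 0 (by decide)
    1 one_pos (by norm_num [pdI]) (by norm_num [pdI, pdI']) (by norm_num [pdI, pdI'])
    (by norm_num [pdI, pdI'])
    (by
      intro k hk j' hj' hne
      fin_cases hk <;> fin_cases hj' <;> simp_all [pdI, pdI'])
    (by
      intro k hk h1 h2
      fin_cases hk <;> simp_all)
  have hI : userProp α pdI 0 = α * (3 / 4 + 1 / 101) := by
    simp only [userProp, pdI]
    norm_num
  have hI' : userProp α pdI' 0 = α * (2 / 3 + 1 / 51) := by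
    simp only [userProp, pdI']
    norm_num
  rw [hI, hI'] at key
  nlinarith
end

section
/- The rule UserEQ is not Sybil-proof: there exist instances I = (N, C, w) and I' = (N, C', w') with C ⊆ C' and a subset C* ⊆ C satisfying the hypotheses of Sybil-proofness but with φ_I(C\C*) ≠ φ_{I'}(C'\C*) under UserEQ. -/
open Finset

/-- Counterexample instance `I`: one user `0`, artists `{0,1}`, weight `1` each. -/
def instA : Inst where
  users := {0}
  artists := {0, 1}
  w := fun i j => if i = 0 ∧ j < 2 then 1 else 0
  users_nonempty := Finset.singleton_nonempty 0
  w_nonneg := by intro i j; split <;> norm_num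
  w_supp := by
    intro i j h
    split at h
    · rename_i hc
      obtain ⟨hi, hj⟩ := hc
      subst hi
      constructor
      · simp
      · interval_cases j <;> simp
    · exact absurd rfl h
  w_pos := by
    intro i hi
    simp only [Finset.mem_singleton] at hi
    subst hi
    have : ∑ j ∈ ({0, 1} : Finset ℕ), (if (0 : ℕ) = 0 ∧ j < 2 then (1 : ℝ) else 0) = 2 := by
      rw [Finset.sum_insert (by decide), Finset.sum_singleton]; norm_num
    rw [this]; norm_num

/-- Counterexample instance `I'`: one user `0`, artists `{0,1,2}`, artist `1` split into
`1` and `2` with weight `1/2` each. -/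
noncomputable def instB : Inst where
  users := {0}
  artists := {0, 1, 2}
  w := fun i j => if i = 0 ∧ j = 0 then 1 else if i = 0 ∧ j < 3 then 1/2 else 0
  users_nonempty := Finset.singleton_nonempty 0
  w_nonneg := by intro i j; split <;> [norm_num; (split <;> norm_num)]
  w_supp := by
    intro i j h
    split at h
    · rename_i hc
      obtain ⟨hi, hj⟩ := hc
      subst hi hj
      simp
    · split at h
      · rename_i hc
        obtain ⟨hi, hj⟩ := hc
        subst hi
        constructor
        · simp
        · interval_cases j <;> simp
      · exact absurd rfl h
  w_pos := by
    intro i hi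
    simp only [Finset.mem_singleton] at hi
    subst hi
    have : ∑ j ∈ ({0, 1, 2} : Finset ℕ),
        (if (0 : ℕ) = 0 ∧ j = 0 then (1 : ℝ) else if (0 : ℕ) = 0 ∧ j < 3 then 1/2 else 0)
        = 2 := by
      rw [Finset.sum_insert (by decide), Finset.sum_insert (by decide),
        Finset.sum_singleton]
      norm_num
    rw [this]; norm_num

theorem stmt15 (α : ℝ) (hα : α ∈ Set.Ioc (0 : ℝ) 1) :
    ¬ SybilProof (userEQ α) := by
  intro h
  have hwA0 : instA.w 0 0 = 1 := by norm_num [instA]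
  have hwA1 : instA.w 0 1 = 1 := by norm_num [instA]
  have hwB0 : instB.w 0 0 = 1 := by norm_num [instB]
  have hwB1 : instB.w 0 1 = 1/2 := by norm_num [instB]
  have hwB2 : instB.w 0 2 = 1/2 := by norm_num [instB]
  have key := h instA instB rfl (by decide) {0} (by decide)
    (by
      intro i hi j hj
      simp only [instA, Finset.mem_singleton] at hi hj
      subst hi hj
      rw [hwA0, hwB0])
    (by
      intro i hi
      simp only [instA, Finset.mem_singleton] at hi
      subst hi
      have h1 : instA.artists \ ({0} : Finset ℕ) = {1} := by decide
      have h2 : instB.artists \ ({0} : Finset ℕ) = {1, 2} := by decide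
      rw [h1, h2, Finset.sum_singleton, Finset.sum_insert (by decide),
        Finset.sum_singleton, hwA1, hwB1, hwB2]
      norm_num)
  have h1 : instA.artists \ ({0} : Finset ℕ) = {1} := by decide
  have h2 : instB.artists \ ({0} : Finset ℕ) = {1, 2} := by decide
  rw [h1, h2] at key
  have fA : (instA.artists.filter (fun j' => 0 < instA.w 0 j')) = instA.artists := by
    rw [Finset.filter_eq_self]
    intro j hj
    fin_cases hj
    · rw [hwA0]; norm_num
    · rw [hwA1]; norm_num
  have fB : (instB.artists.filter (fun j' => 0 < instB.w 0 j')) = instB.artists := by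
    rw [Finset.filter_eq_self]
    intro j hj
    fin_cases hj
    · rw [hwB0]; norm_num
    · rw [hwB1]; norm_num
    · rw [hwB2]; norm_num
  have cA : (instA.artists.card : ℝ) = 2 := by norm_num [instA]
  have cB : (instB.artists.card : ℝ) = 3 := by norm_num [instB]
  simp only [userEQ] at key
  rw [show (instA.users : Finset ℕ) = {0} from rfl,
    show (instB.users : Finset ℕ) = {0} from rfl] at key
  rw [Finset.sum_insert (by decide)] at key
  simp only [Finset.sum_singleton, fA, fB, cA, cB] at key
  rw [hwA1, hwB1, hwB2] at key
  norm_num at key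
  have hpos := hα.1
  nlinarith [key]
end

section
/- The rule UserEQ is Pigou-Dalton consistent. -/
open Finset

theorem stmt16 (α : ℝ) (hα : α ∈ Set.Ioc (0 : ℝ) 1) :
    PigouDalton (userEQ α) := by
  classical
  intro I I' hu ha i hi i' hi' hne j hj δ hδ hpos hwi hwi' hle hfix hfix'
  unfold userEQ
  rw [hu]
  apply mul_le_mul_of_nonneg_left _ (le_of_lt hα.1)
  apply Finset.sum_le_sum
  intro k hk
  by_cases hki : k = i
  · subst hki
    have hkusers : k ∈ I.users := by rwa [hu]
    have hposI : 0 < I.w k j := lt_trans hδ (by linarith)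
    have hposI' : 0 < I'.w k j := by rw [hwi]; exact hpos
    have hfilter : I.artists.filter (fun j' => 0 < I.w k j')
        = I'.artists.filter (fun j' => 0 < I'.w k j') := by
      rw [← ha]
      apply Finset.filter_congr
      intro j' hj'
      by_cases hjj : j' = j
      · subst hjj; simp [hposI, hposI']
      · rw [hfix k hkusers j' hj' hjj]
    rw [hfilter, if_pos hposI, if_pos hposI']
  · by_cases hki' : k = i'
    · subst hki'
      have hkusers : k ∈ I.users := by rwa [hu]
      by_cases hp : 0 < I.w k j
      · have hposI' : 0 < I'.w k j := by rw [hwi']; linarith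
        have hfilter : I.artists.filter (fun j' => 0 < I.w k j')
            = I'.artists.filter (fun j' => 0 < I'.w k j') := by
          rw [← ha]
          apply Finset.filter_congr
          intro j' hj'
          by_cases hjj : j' = j
          · subst hjj; simp [hp, hposI']
          · rw [hfix k hkusers j' hj' hjj]
        rw [hfilter, if_pos hp, if_pos hposI']
      · rw [if_neg hp, zero_div]
        apply div_nonneg
        · split <;> norm_num
        · exact Nat.cast_nonneg _
    · have hkusers : k ∈ I.users := by rwa [hu]
      have hw : ∀ j' ∈ I.artists, I.w k j' = I'.w k j' := by
        intro j' hj'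
        by_cases hjj : j' = j
        · subst hjj; exact hfix' k hkusers hki hki'
        · exact hfix k hkusers j' hj' hjj
      have hfilter : I.artists.filter (fun j' => 0 < I.w k j')
          = I'.artists.filter (fun j' => 0 < I'.w k j') := by
        rw [← ha]
        apply Finset.filter_congr
        intro j' hj'
        rw [hw j' hj']
      rw [hfilter, hw j hj]
end

section
/- For every α ∈ (0,1] and every payment rule φ, if there exists a real number k such that for every instance I in which every artist has positive total engagement, max_{j∈C} PPS(φ, I, j) ≤ k · min_{j'∈C} PPS(φ, I, j'), then φ is not fraud-proof and not bribery-proof. -/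
open Finset

/-! ### Auxiliary constructions for `stmt17` -/

/-- Build a two-artist instance on user set `U` with engagement `a i` with artist `0`
and `b i` with artist `1`. -/
def mkInst (U : Finset ℕ) (hU : U.Nonempty) (a b : ℕ → ℝ)
    (ha : ∀ i, 0 ≤ a i) (hb : ∀ i, 0 ≤ b i)
    (hpos : ∀ i ∈ U, 0 < a i + b i) : Inst where
  users := U
  artists := {0, 1}
  w := fun i j => if i ∈ U then (if j = 0 then a i else if j = 1 then b i else 0) else 0
  users_nonempty := hU
  w_nonneg := by
    intro i j
    split_ifs <;> first | exact ha i | exact hb i | exact le_refl 0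
  w_supp := by
    intro i j h
    split_ifs at h with h1 h2 h3
    · exact ⟨h1, by simp [h2]⟩
    · exact ⟨h1, by simp [h3]⟩
    · exact absurd rfl h
    · exact absurd rfl h
  w_pos := by
    intro i hi
    rw [Finset.sum_pair (by norm_num : (0:ℕ) ≠ 1)]
    simpa [hi] using hpos i hi

lemma mkInst_w (U : Finset ℕ) (hU : U.Nonempty) (a b : ℕ → ℝ)
    (ha : ∀ i, 0 ≤ a i) (hb : ∀ i, 0 ≤ b i)
    (hpos : ∀ i ∈ U, 0 < a i + b i) (i j : ℕ) :
    (mkInst U hU a b ha hb hpos).w i j =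
      if i ∈ U then (if j = 0 then a i else if j = 1 then b i else 0) else 0 := rfl

lemma mkInst_col0 (U : Finset ℕ) (hU : U.Nonempty) (a b : ℕ → ℝ)
    (ha : ∀ i, 0 ≤ a i) (hb : ∀ i, 0 ≤ b i)
    (hpos : ∀ i ∈ U, 0 < a i + b i) :
    ∑ i ∈ U, (mkInst U hU a b ha hb hpos).w i 0 = ∑ i ∈ U, a i := by
  refine Finset.sum_congr rfl fun i hi => ?_
  simp [mkInst_w, hi]

lemma mkInst_col1 (U : Finset ℕ) (hU : U.Nonempty) (a b : ℕ → ℝ)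
    (ha : ∀ i, 0 ≤ a i) (hb : ∀ i, 0 ≤ b i)
    (hpos : ∀ i ∈ U, 0 < a i + b i) :
    ∑ i ∈ U, (mkInst U hU a b ha hb hpos).w i 1 = ∑ i ∈ U, b i := by
  refine Finset.sum_congr rfl fun i hi => ?_
  simp [mkInst_w, hi]

set_option maxHeartbeats 1600000 in
theorem stmt17 (α : ℝ) (hα : α ∈ Set.Ioc (0 : ℝ) 1)
    (φ : Inst → ℕ → ℝ) (hφ : IsRule α φ) (k : ℝ)
    (hk : ∀ I : Inst, (∀ j ∈ I.artists, 0 < ∑ i ∈ I.users, I.w i j) →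
      ∀ j ∈ I.artists, ∀ j' ∈ I.artists,
        φ I j / (∑ i ∈ I.users, I.w i j) ≤ k * (φ I j' / (∑ i ∈ I.users, I.w i j'))) :
    ¬ FraudProof φ ∧ ¬ BriberyProof φ := by
  obtain ⟨hα0, hα1⟩ := hα
  -- parameters
  set n : ℕ := ⌈(2:ℝ)/α⌉₊ with hn_def
  have hn2 : (2:ℝ) ≤ α * n := by
    have h := Nat.le_ceil ((2:ℝ)/α)
    rw [div_le_iff₀ hα0] at h
    calc (2:ℝ) ≤ (⌈(2:ℝ)/α⌉₊ : ℝ) * α := h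
    _ = α * n := by rw [hn_def]; ring
  have hN2 : (2:ℝ) ≤ (n:ℝ) := by nlinarith [(Nat.cast_nonneg n : (0:ℝ) ≤ n)]
  have hn1 : 1 ≤ n := by exact_mod_cast le_trans (by norm_num : (1:ℝ) ≤ 2) hN2
  have hNpos : (0:ℝ) < n := by linarith
  set K : ℝ := max k 1 with hK_def
  have hK1 : (1:ℝ) ≤ K := le_max_right k 1
  have hK0 : (0:ℝ) < K := by linarith
  have hkK : k ≤ K := le_max_left k 1
  set ε : ℝ := 1/(4*K) with hε_def
  have hε : 0 < ε := by rw [hε_def]; positivity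
  set W : ℝ := 4*K*n with hW_def
  have hW : 0 < W := by rw [hW_def]; positivity
  have hKε : K * ε = 1/4 := by rw [hε_def]; field_simp
  -- the three instances
  set IA : Inst := mkInst (Finset.Icc 1 n) ⟨1, by simp [hn1]⟩
      (fun _ => 1) (fun i => if i = 1 then ε else 0)
      (fun _ => by norm_num)
      (fun i => by split_ifs <;> linarith)
      (fun i _ => by split_ifs <;> linarith)
  set IB : Inst := mkInst (Finset.range (n+1)) ⟨0, by simp⟩
      (fun i => if 1 ≤ i then 1 else 0)
      (fun i => if i = 1 then ε else if i = 0 then W else 0)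
      (fun i => by split_ifs <;> norm_num)
      (fun i => by split_ifs <;> linarith)
      (fun i _ => by
        rcases Nat.eq_zero_or_pos i with rfl | hi
        · simpa using hW
        · have h1 : 1 ≤ i := hi
          simp only [h1, if_true]
          split_ifs <;> linarith)
  set IC : Inst := mkInst (Finset.range (n+1)) ⟨0, by simp⟩
      (fun _ => 1) (fun i => if i = 1 then ε else 0)
      (fun _ => by norm_num)
      (fun i => by split_ifs <;> linarith)
      (fun i _ => by split_ifs <;> linarith)
  have hAu : IA.users = Finset.Icc 1 n := rfl
  have hAa : IA.artists = {0, 1} := rfl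
  have hAw : ∀ i j, IA.w i j =
      if i ∈ Finset.Icc 1 n then
        (if j = 0 then (1:ℝ) else if j = 1 then (if i = 1 then ε else 0) else 0) else 0 :=
    fun _ _ => rfl
  have hBu : IB.users = Finset.range (n+1) := rfl
  have hBa : IB.artists = {0, 1} := rfl
  have hBw : ∀ i j, IB.w i j =
      if i ∈ Finset.range (n+1) then
        (if j = 0 then (if 1 ≤ i then (1:ℝ) else 0)
          else if j = 1 then (if i = 1 then ε else if i = 0 then W else 0) else 0) else 0 :=
    fun _ _ => rfl
  have hCu : IC.users = Finset.range (n+1) := rfl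
  have hCa : IC.artists = {0, 1} := rfl
  have hCw : ∀ i j, IC.w i j =
      if i ∈ Finset.range (n+1) then
        (if j = 0 then (1:ℝ) else if j = 1 then (if i = 1 then ε else 0) else 0) else 0 :=
    fun _ _ => rfl
  clear_value IA; clear_value IB; clear_value IC; clear_value W; clear_value ε; clear_value K; clear_value n
  -- column sums
  have h1mem : (1:ℕ) ∈ Finset.Icc 1 n := Finset.mem_Icc.mpr ⟨le_refl 1, hn1⟩
  have h1mem' : (1:ℕ) ∈ Finset.range (n+1) := Finset.mem_range.mpr (by omega)
  have cA0 : ∑ i ∈ IA.users, IA.w i 0 = (n:ℝ) := by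
    rw [hAu]
    rw [Finset.sum_congr rfl (fun i hi => by rw [hAw]; simp [hi] : ∀ i ∈ Finset.Icc 1 n, IA.w i 0 = 1)]
    simp [Nat.card_Icc]
  have cA1 : ∑ i ∈ IA.users, IA.w i 1 = ε := by
    rw [hAu]
    rw [Finset.sum_congr rfl
      (fun i hi => by rw [hAw]; simp [hi] : ∀ i ∈ Finset.Icc 1 n, IA.w i 1 = if i = 1 then ε else 0)]
    rw [Finset.sum_ite_eq' (Finset.Icc 1 n) 1 (fun _ => ε), if_pos h1mem]
  have cB0 : ∑ i ∈ IB.users, IB.w i 0 = (n:ℝ) := by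
    rw [hBu]
    rw [Finset.sum_congr rfl (fun i hi => by rw [hBw]; simp [hi] :
      ∀ i ∈ Finset.range (n+1), IB.w i 0 = if 1 ≤ i then (1:ℝ) else 0)]
    rw [Finset.sum_range_succ']
    simp [Nat.succ_le_succ]
  have cB1 : ∑ i ∈ IB.users, IB.w i 1 = W + ε := by
    rw [hBu]
    rw [Finset.sum_congr rfl (fun i hi => by rw [hBw]; simp [hi] :
      ∀ i ∈ Finset.range (n+1), IB.w i 1 = if i = 1 then ε else if i = 0 then W else 0)]
    rw [Finset.sum_range_succ']
    have : ∀ i ∈ Finset.range n, (if i + 1 = 1 then ε else if i + 1 = 0 then W else 0)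
        = if i = 0 then ε else 0 := by
      intro i _
      rcases Nat.eq_zero_or_pos i with rfl | hi
      · simp
      · have : i + 1 ≠ 1 := by omega
        simp [this, Nat.pos_iff_ne_zero.mp hi]
    rw [Finset.sum_congr rfl this, Finset.sum_ite_eq' (Finset.range n) 0 (fun _ => ε),
      if_pos (Finset.mem_range.mpr (by omega))]
    norm_num
    ring
  have cC0 : ∑ i ∈ IC.users, IC.w i 0 = (n:ℝ) + 1 := by
    rw [hCu]
    rw [Finset.sum_congr rfl (fun i hi => by rw [hCw]; simp [hi] :
      ∀ i ∈ Finset.range (n+1), IC.w i 0 = 1)]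
    simp
  have cC1 : ∑ i ∈ IC.users, IC.w i 1 = ε := by
    rw [hCu]
    rw [Finset.sum_congr rfl (fun i hi => by rw [hCw]; simp [hi] :
      ∀ i ∈ Finset.range (n+1), IC.w i 1 = if i = 1 then ε else 0)]
    rw [Finset.sum_ite_eq' (Finset.range (n+1)) 1 (fun _ => ε), if_pos h1mem']
  -- rule facts
  obtain ⟨nnA, sA⟩ := hφ IA trivial
  obtain ⟨nnB, sB⟩ := hφ IB trivial
  obtain ⟨nnC, sC⟩ := hφ IC trivial
  have h01 : (0:ℕ) ≠ 1 := by norm_num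
  have m0A : (0:ℕ) ∈ IA.artists := by rw [hAa]; simp
  have m1A : (1:ℕ) ∈ IA.artists := by rw [hAa]; simp
  have m0B : (0:ℕ) ∈ IB.artists := by rw [hBa]; simp
  have m1B : (1:ℕ) ∈ IB.artists := by rw [hBa]; simp
  have m0C : (0:ℕ) ∈ IC.artists := by rw [hCa]; simp
  have m1C : (1:ℕ) ∈ IC.artists := by rw [hCa]; simp
  rw [hAa, Finset.sum_pair h01, hAu] at sA
  rw [hBa, Finset.sum_pair h01, hBu] at sB
  rw [hCa, Finset.sum_pair h01, hCu] at sC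
  have sA' : φ IA 0 + φ IA 1 = α * n := by
    rw [sA]; simp [Nat.card_Icc]
  have sB' : φ IB 0 + φ IB 1 = α * ((n:ℝ) + 1) := by
    rw [sB]; push_cast [Finset.card_range]; ring
  have sC' : φ IC 0 + φ IC 1 = α * ((n:ℝ) + 1) := by
    rw [sC]; push_cast [Finset.card_range]; ring
  have nnA0 := nnA 0 m0A
  have nnA1 := nnA 1 m1A
  have nnB0 := nnB 0 m0B
  have nnB1 := nnB 1 m1B
  have nnC0 := nnC 0 m0C
  have nnC1 := nnC 1 m1C
  -- positivity of column sums
  have posA : ∀ j ∈ IA.artists, 0 < ∑ i ∈ IA.users, IA.w i j := by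
    intro j hj
    rw [hAa] at hj
    rcases Finset.mem_insert.mp hj with rfl | hj
    · rw [cA0]; linarith
    · rw [Finset.mem_singleton.mp hj, cA1]; exact hε
  have posB : ∀ j ∈ IB.artists, 0 < ∑ i ∈ IB.users, IB.w i j := by
    intro j hj
    rw [hBa] at hj
    rcases Finset.mem_insert.mp hj with rfl | hj
    · rw [cB0]; linarith
    · rw [Finset.mem_singleton.mp hj, cB1]; linarith
  have posC : ∀ j ∈ IC.artists, 0 < ∑ i ∈ IC.users, IC.w i j := by
    intro j hj
    rw [hCa] at hj
    rcases Finset.mem_insert.mp hj with rfl | hj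
    · rw [cC0]; linarith
    · rw [Finset.mem_singleton.mp hj, cC1]; exact hε
  -- the PPS bound for IA : φ IA 1 ≤ 1/4
  have hkA := hk IA posA 1 m1A 0 m0A
  rw [cA0, cA1] at hkA
  have hA1 : φ IA 1 ≤ 1/4 := by
    have hdiv : φ IA 0 / n ≤ 1 := (div_le_one hNpos).mpr (by linarith [mul_le_of_le_one_left hNpos.le hα1])
    have h1 : φ IA 1 / ε ≤ K := by
      calc φ IA 1 / ε ≤ k * (φ IA 0 / n) := hkA
      _ ≤ K * (φ IA 0 / n) := mul_le_mul_of_nonneg_right hkK (div_nonneg nnA0 hNpos.le)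
      _ ≤ K * 1 := mul_le_mul_of_nonneg_left hdiv hK0.le
      _ = K := mul_one K
    have h2 := (div_le_iff₀ hε).mp h1
    linarith [hKε]
  -- the PPS bound for IC : φ IC 1 ≤ 1/4
  have hkC := hk IC posC 1 m1C 0 m0C
  rw [cC0, cC1] at hkC
  have hN1pos : (0:ℝ) < (n:ℝ) + 1 := by linarith
  have hC1 : φ IC 1 ≤ 1/4 := by
    have hdiv : φ IC 0 / ((n:ℝ)+1) ≤ 1 := (div_le_one hN1pos).mpr (by linarith [mul_le_of_le_one_left hN1pos.le hα1])
    have h1 : φ IC 1 / ε ≤ K := by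
      calc φ IC 1 / ε ≤ k * (φ IC 0 / ((n:ℝ)+1)) := hkC
      _ ≤ K * (φ IC 0 / ((n:ℝ)+1)) := mul_le_mul_of_nonneg_right hkK (div_nonneg nnC0 hN1pos.le)
      _ ≤ K * 1 := mul_le_mul_of_nonneg_left hdiv hK0.le
      _ = K := mul_one K
    have h2 := (div_le_iff₀ hε).mp h1
    linarith [hKε]
  -- the PPS bound for IB : φ IB 1 > 8/5
  have hkB := hk IB posB 0 m0B 1 m1B
  rw [cB0, cB1] at hkB
  have hWε : (0:ℝ) < W + ε := by linarith
  have hB1 : 8/5 < φ IB 1 := by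
    have hd : φ IB 1 / (W + ε) ≤ φ IB 1 / W :=
      div_le_div_of_nonneg_left nnB1 hW (by linarith) |>.trans_eq rfl
    have hch : K * (φ IB 1 / W) = φ IB 1 / (4 * (n:ℝ)) := by
      rw [hW_def]; field_simp
    have hkB' : φ IB 0 / n ≤ φ IB 1 / (4 * (n:ℝ)) := by
      calc φ IB 0 / n ≤ k * (φ IB 1 / (W + ε)) := hkB
      _ ≤ K * (φ IB 1 / (W + ε)) := mul_le_mul_of_nonneg_right hkK (div_nonneg nnB1 hWε.le)
      _ ≤ K * (φ IB 1 / W) := mul_le_mul_of_nonneg_left hd hK0.le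
      _ = φ IB 1 / (4 * (n:ℝ)) := hch
    have h4 : 4 * φ IB 0 ≤ φ IB 1 := by
      have := (div_le_div_iff₀ hNpos (by linarith : (0:ℝ) < 4 * (n:ℝ))).mp hkB'
      nlinarith
    have hexp : α * ((n:ℝ) + 1) = α * n + α := by ring
    linarith
  -- weights of IA/IC agree with IB away from user 0
  have agreeA : ∀ i ∈ IA.users, ∀ j ∈ IA.artists, IA.w i j = IB.w i j := by
    intro i hi j _
    rw [hAu] at hi
    have hi' := Finset.mem_Icc.mp hi
    rw [hAw, hBw]
    simp only [Finset.mem_Icc, Finset.mem_range]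
    split_ifs <;> first | rfl | omega
  have agreeC : ∀ i, i ≠ 0 → ∀ j, IC.w i j = IB.w i j := by
    intro i hi j
    rw [hCw, hBw]
    simp only [Finset.mem_range]
    split_ifs <;> first | rfl | omega
  constructor
  · -- not fraud-proof
    intro fp
    have hfraud := fp IA IB trivial trivial {0}
      (by rw [hBu]; simp)
      (by rw [hAu, hBu]; ext i;
          simp only [Finset.mem_Icc, Finset.mem_sdiff, Finset.mem_range, Finset.mem_singleton];
          omega)
      (by rw [hAa, hBa]) agreeA {1} (by rw [hAa]; simp)
    simp only [Finset.sum_singleton, Finset.card_singleton, Nat.cast_one] at hfraud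
    linarith
  · -- not bribery-proof
    intro bp
    have hbr := bp IC IB trivial trivial (by rw [hCu, hBu]) (by rw [hCa, hBa]) {1}
      (by rw [hCa]; simp)
    have hbc : bribedCount IC IB = 1 := by
      unfold bribedCount
      have hfil : IC.users.filter (fun i => ∃ j ∈ IC.artists, IC.w i j ≠ IB.w i j) = {0} := by
        ext i
        simp only [Finset.mem_filter, Finset.mem_singleton]
        constructor
        · rintro ⟨hi, j, hj, hne⟩
          by_contra h0
          exact hne (agreeC i h0 j)
        · rintro rfl
          refine ⟨by rw [hCu]; simp, 0, m0C, ?_⟩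
          rw [hCw, hBw]
          have h0 : (0:ℕ) ∈ Finset.range (n+1) := by simp
          simp only [h0, if_true, if_pos rfl]
          norm_num
        -- done
      rw [hfil]
      rfl
    rw [hbc] at hbr
    simp only [Finset.sum_singleton, Nat.cast_one] at hbr
    linarith
end

section
/- Fix an instance I = (N, C, w) with |N| = n. If ∑_{j∈C} w_{ij} ≤ (1/(nα)) · ∑_{i'∈N} ∑_{j∈C} w_{i'j} for all i ∈ N, then the payment of ScaledUserProp to every artist equals the payment of GlobalProp to that artist, i.e., for all j ∈ C, ∑_{i∈N} min(γ·∑_{j'∈C} w_{ij'}, 1) · w_{ij}/(∑_{j'∈C} w_{ij'}) = α·n · (∑_{i∈N} w_{ij}) / (∑_{i∈N} ∑_{j'∈C} w_{ij'}), where γ > 0 satisfies ∑_{i∈N} min(γ·∑_{j∈C} w_{ij}, 1) = α·n. -/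
open Finset

theorem stmt18 (α : ℝ) (hα : α ∈ Set.Ioc (0 : ℝ) 1) (I : Inst)
    (γ : ℝ) (hγ : 0 < γ)
    (hγsum : ∑ i ∈ I.users, min (γ * ∑ j ∈ I.artists, I.w i j) 1 = α * I.users.card)
    (hbound : ∀ i ∈ I.users,
      (∑ j ∈ I.artists, I.w i j) ≤
        (1 / ((I.users.card : ℝ) * α)) * ∑ i' ∈ I.users, ∑ j ∈ I.artists, I.w i' j) :
    ∀ j ∈ I.artists,
      (∑ i ∈ I.users,
        (min (γ * ∑ j' ∈ I.artists, I.w i j') 1 * (I.w i j / ∑ j' ∈ I.artists, I.w i j')))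
      = α * I.users.card * (∑ i ∈ I.users, I.w i j) /
          (∑ i ∈ I.users, ∑ j' ∈ I.artists, I.w i j') := by
  intro j hj
  set n : ℝ := (I.users.card : ℝ) with hn
  set S : ℝ := ∑ i ∈ I.users, ∑ j' ∈ I.artists, I.w i j' with hS
  have hSpos : 0 < S := Finset.sum_pos (fun i hi => I.w_pos i hi) I.users_nonempty
  have hnpos : 0 < n := by
    rw [hn]
    exact_mod_cast Finset.card_pos.mpr I.users_nonempty
  have hα0 : 0 < α := hα.1
  have hγge : α * n / S ≤ γ := by
    have h1 : α * n ≤ γ * S := by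
      rw [← hγsum]
      calc ∑ i ∈ I.users, min (γ * ∑ j' ∈ I.artists, I.w i j') 1
          ≤ ∑ i ∈ I.users, γ * ∑ j' ∈ I.artists, I.w i j' :=
            Finset.sum_le_sum (fun i hi => min_le_left _ _)
        _ = γ * S := by rw [hS, Finset.mul_sum]
    rw [div_le_iff₀ hSpos]
    linarith
  have key : ∀ i ∈ I.users,
      α * n / S * (∑ j' ∈ I.artists, I.w i j') ≤
        min (γ * ∑ j' ∈ I.artists, I.w i j') 1 := by
    intro i hi
    have hs0 : 0 ≤ ∑ j' ∈ I.artists, I.w i j' := le_of_lt (I.w_pos i hi)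
    refine le_min (mul_le_mul_of_nonneg_right hγge hs0) ?_
    have hb := hbound i hi
    rw [div_mul_eq_mul_div, div_le_one hSpos]
    have hna : 0 < n * α := mul_pos hnpos hα0
    rw [div_mul_eq_mul_div, le_div_iff₀ hna] at hb
    nlinarith
  have hsum_eq : ∑ i ∈ I.users, α * n / S * (∑ j' ∈ I.artists, I.w i j') = α * n := by
    rw [← Finset.mul_sum, ← hS]
    field_simp
  have heach : ∀ i ∈ I.users,
      min (γ * ∑ j' ∈ I.artists, I.w i j') 1 =
        α * n / S * (∑ j' ∈ I.artists, I.w i j') := by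
    intro i hi
    exact ((Finset.sum_eq_sum_iff_of_le key).mp (by rw [hγsum, hsum_eq]) i hi).symm
  rw [Finset.sum_congr rfl (fun i hi => by rw [heach i hi])]
  have : ∀ i ∈ I.users,
      α * n / S * (∑ j' ∈ I.artists, I.w i j') *
        (I.w i j / ∑ j' ∈ I.artists, I.w i j') = α * n / S * I.w i j := by
    intro i hi
    have hs : (∑ j' ∈ I.artists, I.w i j') ≠ 0 := ne_of_gt (I.w_pos i hi)
    field_simp
  rw [Finset.sum_congr rfl this, ← Finset.mul_sum]
  ring
end

section
/- The rule ScaledUserProp is fraud-proof and bribery-proof. -/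
open Finset

lemma sum_scaled (γ : Inst → ℝ) (I : Inst) (Chat : Finset ℕ) :
    ∑ j ∈ Chat, scaledUserProp γ I j
      = ∑ i ∈ I.users, min (γ I * ∑ j' ∈ I.artists, I.w i j') 1 *
          ((∑ j ∈ Chat, I.w i j) / ∑ j' ∈ I.artists, I.w i j') := by
  unfold scaledUserProp
  rw [Finset.sum_comm]
  refine Finset.sum_congr rfl fun i _ => ?_
  rw [← Finset.mul_sum, ← Finset.sum_div]

lemma key19 (α : ℝ) (hα1 : α ≤ 1)
    (A B B' : Finset ℕ) (hB : Disjoint A B) (hB' : Disjoint A B')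
    (hcard : B.card ≤ B'.card)
    (m m' p p' : ℕ → ℝ)
    (hm0 : ∀ i ∈ A ∪ B, 0 ≤ m i) (hm1 : ∀ i ∈ A ∪ B, m i ≤ 1)
    (hm'0 : ∀ i ∈ A ∪ B', 0 ≤ m' i) (hm'1 : ∀ i ∈ A ∪ B', m' i ≤ 1)
    (hp0 : ∀ i ∈ A ∪ B, 0 ≤ p i) (hp1 : ∀ i ∈ A ∪ B, p i ≤ 1)
    (hp'0 : ∀ i ∈ A ∪ B', 0 ≤ p' i) (hp'1 : ∀ i ∈ A ∪ B', p' i ≤ 1)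
    (hpA : ∀ i ∈ A, p i = p' i)
    (hmono : (∀ i ∈ A, m i ≤ m' i) ∨ (∀ i ∈ A, m' i ≤ m i))
    (hsum : ∑ i ∈ A ∪ B, m i = α * (A ∪ B).card)
    (hsum' : ∑ i ∈ A ∪ B', m' i = α * (A ∪ B').card) :
    ∑ i ∈ A ∪ B', m' i * p' i - ∑ i ∈ A ∪ B, m i * p i ≤ (B'.card : ℝ) := by
  rw [Finset.sum_union hB] at hsum
  rw [Finset.sum_union hB'] at hsum'
  rw [Finset.card_union_of_disjoint hB] at hsum
  rw [Finset.card_union_of_disjoint hB'] at hsum'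
  rw [Finset.sum_union hB, Finset.sum_union hB']
  have hcastc : (B.card : ℝ) ≤ (B'.card : ℝ) := Nat.cast_le.mpr hcard
  rcases hmono with hc | hc
  · -- m ≤ m' on A
    have h1 : ∑ i ∈ A, m' i * p' i - ∑ i ∈ A, m i * p i
        ≤ (∑ i ∈ A, m' i) - ∑ i ∈ A, m i := by
      rw [← Finset.sum_sub_distrib, ← Finset.sum_sub_distrib]
      refine Finset.sum_le_sum fun i hi => ?_
      rw [← hpA i hi]
      have h1 := hp1 i (Finset.mem_union_left _ hi)
      have h0 := hp0 i (Finset.mem_union_left _ hi)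
      have h2 := hc i hi
      nlinarith [mul_nonneg (sub_nonneg.mpr h2) (sub_nonneg.mpr h1)]
    have h2 : ∑ i ∈ B', m' i * p' i ≤ ∑ i ∈ B', m' i := by
      refine Finset.sum_le_sum fun i hi => ?_
      exact mul_le_of_le_one_right (hm'0 i (Finset.mem_union_right _ hi))
        (hp'1 i (Finset.mem_union_right _ hi))
    have h3 : (∑ i ∈ B, m i) - (B.card : ℝ) ≤ ∑ i ∈ B, m i * p i := by
      have : ∑ i ∈ B, (m i - 1) ≤ ∑ i ∈ B, m i * p i := by
        refine Finset.sum_le_sum fun i hi => ?_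
        have h0 := hm0 i (Finset.mem_union_right _ hi)
        have h1 := hm1 i (Finset.mem_union_right _ hi)
        have h2 := hp0 i (Finset.mem_union_right _ hi)
        have h3 := hp1 i (Finset.mem_union_right _ hi)
        nlinarith
      simpa [Finset.sum_sub_distrib] using this
    push_cast at hsum hsum' ⊢
    nlinarith [mul_nonneg (sub_nonneg.mpr hα1) (sub_nonneg.mpr hcastc)]
  · -- m' ≤ m on A
    have h1 : ∑ i ∈ A, m' i * p' i ≤ ∑ i ∈ A, m i * p i := by
      refine Finset.sum_le_sum fun i hi => ?_
      rw [← hpA i hi]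
      exact mul_le_mul_of_nonneg_right (hc i hi) (hp0 i (Finset.mem_union_left _ hi))
    have h2 : ∑ i ∈ B', m' i * p' i ≤ (B'.card : ℝ) := by
      calc ∑ i ∈ B', m' i * p' i ≤ ∑ _i ∈ B', (1 : ℝ) := by
            refine Finset.sum_le_sum fun i hi => ?_
            have := mul_le_of_le_one_right (hm'0 i (Finset.mem_union_right _ hi))
              (hp'1 i (Finset.mem_union_right _ hi))
            exact this.trans (hm'1 i (Finset.mem_union_right _ hi))
        _ = (B'.card : ℝ) := by simp
    have h3 : (0 : ℝ) ≤ ∑ i ∈ B, m i * p i :=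
      Finset.sum_nonneg fun i hi =>
        mul_nonneg (hm0 i (Finset.mem_union_right _ hi)) (hp0 i (Finset.mem_union_right _ hi))
    linarith
lemma boundsAux (I : Inst) (g : ℝ) (hg : 0 < g) (Chat : Finset ℕ) (hC : Chat ⊆ I.artists) :
    ∀ i ∈ I.users,
      (0 ≤ min (g * ∑ j' ∈ I.artists, I.w i j') 1) ∧
      (min (g * ∑ j' ∈ I.artists, I.w i j') 1 ≤ 1) ∧
      (0 ≤ (∑ j ∈ Chat, I.w i j) / ∑ j' ∈ I.artists, I.w i j') ∧
      ((∑ j ∈ Chat, I.w i j) / ∑ j' ∈ I.artists, I.w i j' ≤ 1) := by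
  intro i hi
  have hS : 0 < ∑ j' ∈ I.artists, I.w i j' := I.w_pos i hi
  have hT0 : 0 ≤ ∑ j ∈ Chat, I.w i j := Finset.sum_nonneg fun j _ => I.w_nonneg i j
  have hTS : (∑ j ∈ Chat, I.w i j) ≤ ∑ j' ∈ I.artists, I.w i j' :=
    Finset.sum_le_sum_of_subset_of_nonneg hC (fun j _ _ => I.w_nonneg i j)
  exact ⟨le_min (mul_nonneg hg.le hS.le) zero_le_one, min_le_right _ _,
    div_nonneg hT0 hS.le, (div_le_one hS).mpr hTS⟩
lemma key19' (α : ℝ) (hα1 : α ≤ 1)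
    (A B B' U U' : Finset ℕ) (hU : U = A ∪ B) (hU' : U' = A ∪ B')
    (hB : Disjoint A B) (hB' : Disjoint A B')
    (hcard : B.card ≤ B'.card)
    (m m' p p' : ℕ → ℝ)
    (hm0 : ∀ i ∈ U, 0 ≤ m i) (hm1 : ∀ i ∈ U, m i ≤ 1)
    (hm'0 : ∀ i ∈ U', 0 ≤ m' i) (hm'1 : ∀ i ∈ U', m' i ≤ 1)
    (hp0 : ∀ i ∈ U, 0 ≤ p i) (hp1 : ∀ i ∈ U, p i ≤ 1)
    (hp'0 : ∀ i ∈ U', 0 ≤ p' i) (hp'1 : ∀ i ∈ U', p' i ≤ 1)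
    (hpA : ∀ i ∈ A, p i = p' i)
    (hmono : (∀ i ∈ A, m i ≤ m' i) ∨ (∀ i ∈ A, m' i ≤ m i))
    (hsum : ∑ i ∈ U, m i = α * U.card)
    (hsum' : ∑ i ∈ U', m' i = α * U'.card) :
    ∑ i ∈ U', m' i * p' i - ∑ i ∈ U, m i * p i ≤ (B'.card : ℝ) := by
  subst hU hU'
  exact key19 α hα1 A B B' hB hB' hcard m m' p p' hm0 hm1 hm'0 hm'1 hp0 hp1 hp'0 hp'1
    hpA hmono hsum hsum'

theorem stmt19 (α : ℝ) (hα : α ∈ Set.Ioc (0 : ℝ) 1)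
    (γ : Inst → ℝ) (hγpos : ∀ I : Inst, 0 < γ I)
    (hγ : ∀ I : Inst,
      ∑ i ∈ I.users, min (γ I * ∑ j ∈ I.artists, I.w i j) 1 = α * I.users.card) :
    FraudProof (scaledUserProp γ) ∧ BriberyProof (scaledUserProp γ) := by
  obtain ⟨hα0, hα1⟩ := hα
  constructor
  · -- Fraud-proofness
    intro I I' _ _ Nhat hNsub huser hart hw Chat hChat
    rw [sum_scaled, sum_scaled]
    have hU' : I'.users = I.users ∪ Nhat := by
      rw [huser, Finset.sdiff_union_of_subset hNsub]
    have hdisj : Disjoint I.users Nhat := huser ▸ Finset.sdiff_disjoint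
    have hC' : Chat ⊆ I'.artists := hart ▸ hChat
    have hS : ∀ i ∈ I.users, (∑ j' ∈ I'.artists, I'.w i j') = ∑ j' ∈ I.artists, I.w i j' := by
      intro i hi
      rw [← hart]
      exact Finset.sum_congr rfl fun j hj => (hw i hi j hj).symm
    have hT : ∀ i ∈ I.users, (∑ j ∈ Chat, I'.w i j) = ∑ j ∈ Chat, I.w i j := by
      intro i hi
      exact Finset.sum_congr rfl fun j hj => (hw i hi j (hChat hj)).symm
    have hb := boundsAux I (γ I) (hγpos I) Chat hChat
    have hb' := boundsAux I' (γ I') (hγpos I') Chat hC'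
    refine key19' α hα1 I.users ∅ Nhat I.users I'.users (by simp) hU'
      (Finset.disjoint_empty_right _) hdisj (by simp)
      _ _ _ _
      (fun i hi => (hb i hi).1) (fun i hi => (hb i hi).2.1)
      (fun i hi => (hb' i hi).1) (fun i hi => (hb' i hi).2.1)
      (fun i hi => (hb i hi).2.2.1) (fun i hi => (hb i hi).2.2.2)
      (fun i hi => (hb' i hi).2.2.1) (fun i hi => (hb' i hi).2.2.2)
      (fun i hi => by rw [hS i hi, hT i hi]) ?_ (hγ I) (hγ I')
    rcases le_total (γ I) (γ I') with h | h
    · left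
      intro i hi
      rw [hS i hi]
      exact min_le_min (mul_le_mul_of_nonneg_right h
        (Finset.sum_nonneg fun j _ => I.w_nonneg i j)) le_rfl
    · right
      intro i hi
      rw [hS i hi]
      exact min_le_min (mul_le_mul_of_nonneg_right h
        (Finset.sum_nonneg fun j _ => I.w_nonneg i j)) le_rfl
  · -- Bribery-proofness
    intro I I' _ _ huser hart Chat hChat
    classical
    rw [sum_scaled, sum_scaled]
    set B := I.users.filter (fun i => ∃ j ∈ I.artists, I.w i j ≠ I'.w i j) with hBdef
    have hBc : (bribedCount I I' : ℝ) = (B.card : ℝ) := by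
      unfold bribedCount
      norm_num [hBdef]
    rw [hBc]
    set A := I.users \ B with hAdef
    have hU : I.users = A ∪ B := (Finset.sdiff_union_of_subset (Finset.filter_subset _ _)).symm
    have hU' : I'.users = A ∪ B := huser ▸ hU
    have hdisj : Disjoint A B := Finset.sdiff_disjoint
    have hC' : Chat ⊆ I'.artists := hart ▸ hChat
    have hwA : ∀ i ∈ A, ∀ j ∈ I.artists, I.w i j = I'.w i j := by
      intro i hi j hj
      rw [hAdef, Finset.mem_sdiff, hBdef, Finset.mem_filter] at hi
      by_contra hne
      exact hi.2 ⟨hi.1, j, hj, hne⟩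
    have hAsub : A ⊆ I.users := Finset.sdiff_subset
    have hS : ∀ i ∈ A, (∑ j' ∈ I'.artists, I'.w i j') = ∑ j' ∈ I.artists, I.w i j' := by
      intro i hi
      rw [← hart]
      exact Finset.sum_congr rfl fun j hj => (hwA i hi j hj).symm
    have hT : ∀ i ∈ A, (∑ j ∈ Chat, I'.w i j) = ∑ j ∈ Chat, I.w i j := by
      intro i hi
      exact Finset.sum_congr rfl fun j hj => (hwA i hi j (hChat hj)).symm
    have hb := boundsAux I (γ I) (hγpos I) Chat hChat
    have hb' := boundsAux I' (γ I') (hγpos I') Chat hC'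
    refine key19' α hα1 A B B I.users I'.users hU hU' hdisj hdisj le_rfl
      _ _ _ _
      (fun i hi => (hb i hi).1) (fun i hi => (hb i hi).2.1)
      (fun i hi => (hb' i hi).1) (fun i hi => (hb' i hi).2.1)
      (fun i hi => (hb i hi).2.2.1) (fun i hi => (hb i hi).2.2.2)
      (fun i hi => (hb' i hi).2.2.1) (fun i hi => (hb' i hi).2.2.2)
      (fun i hi => by rw [hS i hi, hT i hi]) ?_ (hγ I) (hγ I')
    rcases le_total (γ I) (γ I') with h | h
    · left
      intro i hi
      rw [hS i hi]
      exact min_le_min (mul_le_mul_of_nonneg_right h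
        (Finset.sum_nonneg fun j _ => I.w_nonneg i j)) le_rfl
    · right
      intro i hi
      rw [hS i hi]
      exact min_le_min (mul_le_mul_of_nonneg_right h
        (Finset.sum_nonneg fun j _ => I.w_nonneg i j)) le_rfl
end
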